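/- Let B ⊇ A ⊆ Ã be C*-inclusions such that the Banach A-bimodule B/A is aperiodic and Ã contains no non-zero aperiodic A-subbimodule. Then there is at most one generalised expectation E : B → Ã (a completely positive contraction restricting to the identity on A). -/

import Mathlib

open scoped ComplexOrder ComplexInnerProductSpace
open Filter Topology

noncomputable section

section Hereditary

variable {A : Type*} [NonUnitalNormedRing A] [StarRing A] [Module ℂ A] [PartialOrder A]

/-- A hereditary subalgebra of a C*-algebra. -/
def IsHereditary (D : NonUnitalStarSubalgebra ℂ A) : Prop :=
  ∀ a d : A, d ∈ D → 0 ≤ a → a ≤ d → a ∈ D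

/-- A non-zero, closed, hereditary C*-subalgebra. -/
def NontrivClosedHereditary (D : NonUnitalStarSubalgebra ℂ A) : Prop :=
  IsClosed (D : Set A) ∧ (∃ d ∈ D, d ≠ 0) ∧ IsHereditary D

end Hereditary

section Incl

variable {A B : Type*}
  [NormedRing A] [StarRing A] [NormedAlgebra ℂ A] [PartialOrder A]
  [NormedRing B] [StarRing B] [NormedAlgebra ℂ B]

/-- Kishimoto's condition for an element of `B`, viewed as an `A`-bimodule via `j`. -/
def KishimotoElem (j : A →⋆ₐ[ℂ] B) (x : B) : Prop :=
  ∀ D : NonUnitalStarSubalgebra ℂ A, NontrivClosedHereditary D →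
    ∀ ε : ℝ, 0 < ε → ∃ a ∈ D, 0 ≤ a ∧ ‖a‖ = 1 ∧ ‖j a * x * j a‖ < ε

/-- Kishimoto's condition for an element of the quotient bimodule `B/A`. -/
def KishimotoQuot (j : A →⋆ₐ[ℂ] B) (x : B) : Prop :=
  ∀ D : NonUnitalStarSubalgebra ℂ A, NontrivClosedHereditary D →
    ∀ ε : ℝ, 0 < ε → ∃ a ∈ D, 0 ≤ a ∧ ‖a‖ = 1 ∧ ∃ y : A, ‖j a * x * j a - j y‖ < ε

/-- The C*-inclusion `j : A → B` is aperiodic if the Banach `A`-bimodule `B/A`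
is aperiodic. -/
def AperiodicInclusion (j : A →⋆ₐ[ℂ] B) : Prop := ∀ x : B, KishimotoQuot j x

/-- An `A`-subbimodule of `B` (with `B` an `A`-bimodule via `j`). -/
def IsSubBimodule (j : A →⋆ₐ[ℂ] B) (S : Submodule ℂ B) : Prop :=
  ∀ a : A, ∀ x ∈ S, j a * x ∈ S ∧ x * j a ∈ S

/-- The inclusion `j : A → B` is anti-aperiodic: `B` contains no non-zero aperiodic
`A`-subbimodule. -/
def AntiAperiodic (j : A →⋆ₐ[ℂ] B) : Prop :=
  ∀ S : Submodule ℂ B, IsSubBimodule j S → (∀ x ∈ S, KishimotoElem j x) → S = ⊥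

end Incl

section CCP

variable {B C : Type*}
  [NormedRing B] [StarRing B] [NormedAlgebra ℂ B]
  [NormedRing C] [StarRing C] [NormedAlgebra ℂ C] [PartialOrder C]

/-- A completely positive contraction between C*-algebras. -/
def IsCCP (T : B →ₗ[ℂ] C) : Prop :=
  (∀ b, ‖T b‖ ≤ ‖b‖) ∧
  ∀ (n : ℕ) (b : Fin n → B) (c : Fin n → C),
    0 ≤ ∑ i, ∑ k, star (c i) * T (star (b i) * b k) * c k

end CCP

/-- A generalised expectation for the inclusion `ι : A → B`, relative to the
inclusion `j : A → C`: a completely positive contraction restricting to the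
identity on `A`. -/
def IsGenExpectation {A B C : Type*}
    [NormedRing A] [StarRing A] [NormedAlgebra ℂ A]
    [NormedRing B] [StarRing B] [NormedAlgebra ℂ B]
    [NormedRing C] [StarRing C] [NormedAlgebra ℂ C] [PartialOrder C]
    (ι : A →⋆ₐ[ℂ] B) (j : A →⋆ₐ[ℂ] C) (E : B →ₗ[ℂ] C) : Prop :=
  IsCCP E ∧ ∀ a : A, E (ι a) = j a

section UniqueHelpers

variable {B C : Type*}
  [NormedRing B] [StarRing B] [CStarRing B] [NormedAlgebra ℂ B]
  [StarModule ℂ B] [PartialOrder B] [StarOrderedRing B] [CompleteSpace B]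
  [NormedRing C] [StarRing C] [CStarRing C] [NormedAlgebra ℂ C]
  [StarModule ℂ C] [PartialOrder C] [StarOrderedRing C] [CompleteSpace C]

/-- A CCP map is positive. -/
lemma IsCCP.nonneg_map {E : B →ₗ[ℂ] C} (hE : IsCCP E) {p : B} (hp : 0 ≤ p) : 0 ≤ E p := by
  letI : CStarAlgebra B := ⟨⟩
  obtain ⟨b, hb⟩ : ∃ b : B, star b * b = p :=
    ⟨CFC.sqrt p, by
      rw [(IsSelfAdjoint.of_nonneg (CFC.sqrt_nonneg p)).star_eq, CFC.sqrt_mul_sqrt_self p hp]⟩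
  have h := hE.2 1 ![b] ![1]
  simpa [hb] using h

/-- A CCP map sends selfadjoint elements to selfadjoint elements. -/
lemma IsCCP.selfAdjoint_map {E : B →ₗ[ℂ] C} (hE : IsCCP E) {p : B} (hp : IsSelfAdjoint p) :
    IsSelfAdjoint (E p) := by
  letI : CStarAlgebra B := ⟨⟩
  have h : E p = E p⁺ - E p⁻ := by
    conv_lhs => rw [← CFC.posPart_sub_negPart p hp]
    rw [map_sub]
  rw [h]
  exact (IsSelfAdjoint.of_nonneg (hE.nonneg_map (CFC.posPart_nonneg p))).sub
    (IsSelfAdjoint.of_nonneg (hE.nonneg_map (CFC.negPart_nonneg p)))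

/-- A CCP map is star-preserving. -/
lemma IsCCP.map_star' {E : B →ₗ[ℂ] C} (hE : IsCCP E) (x : B) : E (star x) = star (E x) := by
  have hu : IsSelfAdjoint (x + star x) := by
    simp [IsSelfAdjoint, star_add, add_comm]
  have hw : IsSelfAdjoint (Complex.I • (x - star x)) := by
    simp only [IsSelfAdjoint, star_smul, star_sub, star_star, RCLike.star_def, Complex.conj_I,
      neg_smul, smul_sub]
    module
  have eq1 : star (E x) + star (E (star x)) = E x + E (star x) := by
    have h := (hE.selfAdjoint_map hu).star_eq
    rw [map_add, star_add] at h
    exact h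
  have eq2 : star (E x) - star (E (star x)) = E (star x) - E x := by
    have h := (hE.selfAdjoint_map hw).star_eq
    rw [map_smul, star_smul, RCLike.star_def, Complex.conj_I, map_sub, star_sub,
      neg_smul, neg_eq_iff_eq_neg, ← smul_neg] at h
    have h2 := smul_right_injective C Complex.I_ne_zero h
    rw [neg_sub] at h2
    exact h2
  have h2 : star (E x) + star (E x) = E (star x) + E (star x) := by
    rw [show star (E x) + star (E x)
        = (star (E x) + star (E (star x))) + (star (E x) - star (E (star x))) by abel,
      eq1, eq2]
    abel
  have h3 : (2 : ℂ) • star (E x) = (2 : ℂ) • E (star x) := by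
    rw [two_smul, two_smul, h2]
  exact (smul_right_injective C two_ne_zero h3).symm

/-- Scaling a nonneg element of a C*-algebra by a nonneg real. -/
lemma ccp_smul_nonneg {x : C} (hx : 0 ≤ x) {t : ℝ} (ht : 0 ≤ t) : 0 ≤ (t : ℂ) • x := by
  have h := star_left_conjugate_nonneg hx (((Real.sqrt t : ℝ) : ℂ) • (1 : C))
  have e : star (((Real.sqrt t : ℝ) : ℂ) • (1 : C)) * x * (((Real.sqrt t : ℝ) : ℂ) • (1 : C))
      = (t : ℂ) • x := by
    simp only [star_smul, star_one, RCLike.star_def, Complex.conj_ofReal, smul_mul_assoc,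
      mul_smul_comm, one_mul, mul_one, smul_smul, ← Complex.ofReal_mul,
      Real.mul_self_sqrt ht]
  rwa [e] at h

/-- If `t • k + R` is nonneg for every real `t`, then `k = 0`. -/
lemma eq_zero_of_forall_smul_add_nonneg {k R : C}
    (h : ∀ t : ℝ, 0 ≤ (t : ℂ) • k + R) : k = 0 := by
  letI : CStarAlgebra C := ⟨⟩
  have key : ∀ m : C, (∀ t : ℝ, 0 ≤ (t : ℂ) • m + R) → 0 ≤ m := by
    intro m hm
    have h2 : ∀ n : ℕ, 0 ≤ m + ((((n : ℝ) + 1)⁻¹ : ℝ) : ℂ) • R := by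
      intro n
      have hpos : (0:ℝ) < (n : ℝ) + 1 := by positivity
      have := ccp_smul_nonneg (hm ((n : ℝ) + 1)) (le_of_lt (inv_pos.mpr hpos))
      rwa [smul_add, smul_smul, ← Complex.ofReal_mul, inv_mul_cancel₀ hpos.ne',
        Complex.ofReal_one, one_smul] at this
    have hcl : IsClosed {x : C | 0 ≤ x} := CStarAlgebra.isClosed_nonneg
    have htend : Filter.Tendsto (fun n : ℕ => m + ((((n : ℝ) + 1)⁻¹ : ℝ) : ℂ) • R)
        Filter.atTop (nhds m) := by
      have h0 : Filter.Tendsto (fun n : ℕ => (((n : ℝ) + 1)⁻¹ : ℝ)) Filter.atTop (nhds 0) :=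
        tendsto_one_div_add_atTop_nhds_zero_nat.congr (by intro n; rw [one_div])
      have h1 : Filter.Tendsto (fun n : ℕ => ((((n : ℝ) + 1)⁻¹ : ℝ) : ℂ))
          Filter.atTop (nhds 0) := by
        have h1' := (Complex.continuous_ofReal.tendsto (0:ℝ)).comp h0
        rw [Complex.ofReal_zero] at h1'
        exact h1'.congr (fun n => rfl)
      have := (h1.smul_const R)
      rw [zero_smul] at this
      simpa using (tendsto_const_nhds (x := m)).add this
    have := hcl.mem_of_tendsto htend (Filter.Eventually.of_forall h2)
    exact this
  have h1 : 0 ≤ k := key k h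
  have h2 : 0 ≤ -k := by
    apply key
    intro t
    have := h (-t)
    simpa [smul_neg, neg_smul] using this
  exact le_antisymm (neg_nonneg.mp h2) h1

end UniqueHelpers


section BimodHelpers

variable {A B C : Type*}
  [NormedRing A] [StarRing A] [CStarRing A] [NormedAlgebra ℂ A]
  [StarModule ℂ A] [PartialOrder A] [StarOrderedRing A] [CompleteSpace A]
  [NormedRing B] [StarRing B] [CStarRing B] [NormedAlgebra ℂ B]
  [StarModule ℂ B] [PartialOrder B] [StarOrderedRing B] [CompleteSpace B]
  [NormedRing C] [StarRing C] [CStarRing C] [NormedAlgebra ℂ C]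
  [StarModule ℂ C] [PartialOrder C] [StarOrderedRing C] [CompleteSpace C]

/-- A generalised expectation is a left `A`-module map. -/
lemma IsGenExpectation.left_mul {ι : A →⋆ₐ[ℂ] B} {j : A →⋆ₐ[ℂ] C} {E : B →ₗ[ℂ] C}
    (hE : IsGenExpectation ι j E) (a : A) (x : B) : E (ι a * x) = j a * E x := by
  suffices H : ∀ a : A, E (star (ι a) * x) = star (j a) * E x by
    have h := H (star a)
    rwa [map_star, star_star, map_star, star_star] at h
  intro a
  have hE1 : E 1 = 1 := by simpa using hE.2 1
  have hEs : ∀ y : B, E (star y) = star (E y) := hE.1.map_star'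
  set w := j a with hw
  set q := E x with hq
  set p := E (star (ι a) * x) with hp
  set d := p - star w * q with hd
  have hM11 : E (star (ι a) * ι a) = star w * w := by
    rw [← map_star, ← map_mul, hE.2, map_mul, map_star]
  have hM01 : E (ι a) = w := hE.2 a
  have hM10 : E (star (ι a)) = star w := by rw [hEs, hM01]
  have hM21 : E (star x * ι a) = star p := by
    rw [show star x * ι a = star (star (ι a) * x) by rw [star_mul, star_star], hEs]
  have key : ∀ z : ℂ, 0 ≤ (starRingEnd ℂ z) • d + z • star d
      + (E (star x * x) - star q * q) := by
    intro z
    have h := hE.1.2 3 ![1, ι a, x] ![-(z • w + q), z • (1:C), 1]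
    simp only [Fin.sum_univ_three, Matrix.cons_val_zero, Matrix.cons_val_one, Matrix.head_cons,
      Matrix.cons_val_two, Matrix.tail_cons, star_one, one_mul, mul_one] at h
    rw [hE1, hM01, hM10, hM11, hM21, hEs x, ← hq, ← hp] at h
    refine le_of_le_of_eq h ?_
    rw [hd]
    simp only [star_sub, star_mul, star_star, star_neg, star_add, star_smul, star_one, one_mul,
      mul_one, RCLike.star_def, neg_mul, mul_neg, add_mul, mul_add, smul_mul_assoc,
      mul_smul_comm, smul_smul, smul_add, smul_sub, mul_assoc]
    module
  have k1 : d + star d = 0 := by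
    apply eq_zero_of_forall_smul_add_nonneg (R := E (star x * x) - star q * q)
    intro t
    have h := key (t : ℂ)
    refine le_of_le_of_eq h ?_
    rw [Complex.conj_ofReal]
    module
  have k2 : Complex.I • star d - Complex.I • d = 0 := by
    apply eq_zero_of_forall_smul_add_nonneg (R := E (star x * x) - star q * q)
    intro t
    have h := key ((t : ℂ) * Complex.I)
    refine le_of_le_of_eq h ?_
    rw [map_mul, Complex.conj_ofReal, Complex.conj_I]
    module
  have hsd : star d = d := by
    rw [← smul_sub] at k2
    have h0 := smul_right_injective C Complex.I_ne_zero
      (k2.trans (smul_zero Complex.I).symm)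
    exact sub_eq_zero.mp h0
  have hd0 : d = 0 := by
    rw [hsd] at k1
    have h1 : (2 : ℂ) • d = 0 := by rw [two_smul]; exact k1
    exact smul_right_injective C two_ne_zero (h1.trans (smul_zero (2:ℂ)).symm)
  have := sub_eq_zero.mp (hd ▸ hd0)
  simpa [hp, hq, hw] using this

/-- A generalised expectation is a right `A`-module map. -/
lemma IsGenExpectation.right_mul {ι : A →⋆ₐ[ℂ] B} {j : A →⋆ₐ[ℂ] C} {E : B →ₗ[ℂ] C}
    (hE : IsGenExpectation ι j E) (a : A) (x : B) : E (x * ι a) = E x * j a := by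
  have h := hE.left_mul (star a) (star x)
  rw [map_star, map_star] at h
  have h2 := hE.1.map_star' (x * ι a)
  rw [star_mul, h, hE.1.map_star' x] at h2
  have h3 : star (E (x * ι a)) = star (E x * j a) := by
    rw [← h2, star_mul]
  exact star_injective h3

end BimodHelpers

/-- if `A ⊆ B` is aperiodic and `A ⊆ Ã` is anti-aperiodic, then there is at
most one generalised expectation `E : B → Ã`. -/
theorem genExpectation_unique_of_aperiodic_antiAperiodic
    {A B C : Type*} [NormedRing A] [StarRing A] [CStarRing A] [NormedAlgebra ℂ A]
    [StarModule ℂ A] [PartialOrder A] [StarOrderedRing A] [CompleteSpace A]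
    [NormedRing B] [StarRing B] [CStarRing B] [NormedAlgebra ℂ B]
    [StarModule ℂ B] [PartialOrder B] [StarOrderedRing B] [CompleteSpace B]
    [NormedRing C] [StarRing C] [CStarRing C] [NormedAlgebra ℂ C]
    [StarModule ℂ C] [PartialOrder C] [StarOrderedRing C] [CompleteSpace C]
    (ι : A →⋆ₐ[ℂ] B) (hι : Isometry ι) (j : A →⋆ₐ[ℂ] C) (hj : Isometry j)
    (hap : AperiodicInclusion ι) (hanti : AntiAperiodic j)
    (E₁ E₂ : B →ₗ[ℂ] C) (hE₁ : IsGenExpectation ι j E₁) (hE₂ : IsGenExpectation ι j E₂) :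
    E₁ = E₂ := by
  
  have hFl : ∀ (a : A) (x : B), (E₁ - E₂) (ι a * x) = j a * (E₁ - E₂) x := by
    intro a x
    simp only [LinearMap.sub_apply, hE₁.left_mul, hE₂.left_mul, mul_sub]
  have hFr : ∀ (a : A) (x : B), (E₁ - E₂) (x * ι a) = (E₁ - E₂) x * j a := by
    intro a x
    simp only [LinearMap.sub_apply, hE₁.right_mul, hE₂.right_mul, sub_mul]
  have hFA : ∀ a : A, (E₁ - E₂) (ι a) = 0 := by
    intro a
    simp [LinearMap.sub_apply, hE₁.2, hE₂.2]
  have hrange : LinearMap.range (E₁ - E₂) = ⊥ := by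
    apply hanti
    · intro a x hx
      obtain ⟨y, rfl⟩ := hx
      exact ⟨⟨ι a * y, hFl a y⟩, ⟨y * ι a, hFr a y⟩⟩
    · intro x hx D hD ε hε
      obtain ⟨y, rfl⟩ := hx
      obtain ⟨a, haD, ha0, ha1, y', hy'⟩ := hap y D hD (ε / 2) (by positivity)
      refine ⟨a, haD, ha0, ha1, ?_⟩
      have he : j a * (E₁ - E₂) y * j a = (E₁ - E₂) (ι a * y * ι a - ι y') := by
        rw [map_sub, hFA, sub_zero, hFr a (ι a * y), hFl a y]
      rw [he]
      have hb : ‖(E₁ - E₂) (ι a * y * ι a - ι y')‖ ≤ 2 * ‖ι a * y * ι a - ι y'‖ := by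
        rw [LinearMap.sub_apply]
        calc ‖E₁ (ι a * y * ι a - ι y') - E₂ (ι a * y * ι a - ι y')‖
            ≤ ‖E₁ (ι a * y * ι a - ι y')‖ + ‖E₂ (ι a * y * ι a - ι y')‖ := norm_sub_le _ _
          _ ≤ ‖ι a * y * ι a - ι y'‖ + ‖ι a * y * ι a - ι y'‖ :=
              add_le_add (hE₁.1.1 _) (hE₂.1.1 _)
          _ = 2 * ‖ι a * y * ι a - ι y'‖ := by ring
      calc ‖(E₁ - E₂) (ι a * y * ι a - ι y')‖ ≤ 2 * ‖ι a * y * ι a - ι y'‖ := hb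
        _ < 2 * (ε / 2) := by linarith
        _ = ε := by ring
  have hF0 : E₁ - E₂ = 0 := LinearMap.range_eq_bot.mp hrange
  exact sub_eq_zero.mp hF0
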